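/- If both the subsidy level and the tax rate increase, the freight forwarder's optimal driven distance cannot increase (no budget constraint required): let X be a set of feasible routing solutions and, for i = 1,2, let (dᵢ,fᵢ) ∈ X be lower-level optimal for the policy (sᵢ,tᵢ) with 0 ≤ sᵢ ≤ 1 and tᵢ ≥ 0. If s₁ < s₂ and t₁ < t₂, then d₁ ≥ d₂. -/
import Mathlib

/-- If both the subsidy level and the tax rate increase, the freight
forwarder's optimal driven distance cannot increase (no budget constraint
required): if `(dᵢ,fᵢ) ∈ X` is lower-level optimal for `(sᵢ,tᵢ)` with
`0 ≤ sᵢ ≤ 1`, `tᵢ ≥ 0`, and `s₁ < s₂`, `t₁ < t₂`, then `d₁ ≥ d₂`. -/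
theorem stmt12 (X : Set (ℝ × ℝ)) (hX : X.Nonempty)
    (hXnn : ∀ p ∈ X, 0 ≤ p.1 ∧ 0 ≤ p.2)
    (s₁ t₁ d₁ f₁ s₂ t₂ d₂ f₂ : ℝ)
    (hs₁ : 0 ≤ s₁) (hs₁' : s₁ ≤ 1) (ht₁ : 0 ≤ t₁)
    (hs₂ : 0 ≤ s₂) (hs₂' : s₂ ≤ 1) (ht₂ : 0 ≤ t₂)
    (hmem₁ : (d₁, f₁) ∈ X)
    (hopt₁ : ∀ p ∈ X,
      (1 + t₁) * d₁ + (1 - s₁) * f₁ ≤ (1 + t₁) * p.1 + (1 - s₁) * p.2)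
    (hmem₂ : (d₂, f₂) ∈ X)
    (hopt₂ : ∀ p ∈ X,
      (1 + t₂) * d₂ + (1 - s₂) * f₂ ≤ (1 + t₂) * p.1 + (1 - s₂) * p.2)
    (hs : s₁ < s₂) (ht : t₁ < t₂) :
    d₁ ≥ d₂ := by
  by_contra hcon
  push_neg at hcon
  have A := hopt₁ (d₂, f₂) hmem₂
  have B := hopt₂ (d₁, f₁) hmem₁
  simp only at A B
  -- from B: (1+t₂)(d₂−d₁) ≤ (1−s₂)(f₁−f₂), LHS > 0 so f₁ > f₂
  have hd : 0 < d₂ - d₁ := by linarith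
  have hf : f₂ < f₁ := by nlinarith
  nlinarith [mul_lt_mul_of_pos_right ht hd, mul_lt_mul_of_pos_left hs (sub_pos.mpr hf)]
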